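/- Trace-norm contractivity of quantum channels: let K₁, …, K_I be m×n complex matrices with Σ_{i=1}^{I} K_iᴴ K_i = 1ₙ, and define Φ(X) := Σ_{i=1}^{I} K_i X K_iᴴ for n×n complex matrices X. Then for every Hermitian n×n complex matrix X, ‖Φ(X)‖₁ ≤ ‖X‖₁. -/

import Mathlib

open scoped ComplexOrder Matrix

/-- The trace norm `‖M‖₁ = Tr[√(Mᴴ M)]` of a square complex matrix
(the sum of its singular values). -/
noncomputable def traceNorm {ι : Type*} [Fintype ι] [DecidableEq ι] (M : Matrix ι ι ℂ) : ℝ :=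
  (((Matrix.posSemidef_conjTranspose_mul_self M).1.eigenvectorUnitary : Matrix ι ι ℂ) *
    Matrix.diagonal (((↑) : ℝ → ℂ) ∘ (√·) ∘ (Matrix.posSemidef_conjTranspose_mul_self M).1.eigenvalues) *
    (star (Matrix.posSemidef_conjTranspose_mul_self M).1.eigenvectorUnitary : Matrix ι ι ℂ)).trace.re

open Matrix

set_option linter.unusedSectionVars false

variable {ι : Type*} [Fintype ι] [DecidableEq ι]

lemma traceNorm_hermitian (Y : Matrix ι ι ℂ) (hY : Y.IsHermitian) :
    traceNorm Y = ∑ i, |hY.eigenvalues i| := by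
  set U : Matrix ι ι ℂ := (hY.eigenvectorUnitary : Matrix ι ι ℂ) with hU
  set D : Matrix ι ι ℂ := diagonal (Complex.ofReal ∘ fun i => |hY.eigenvalues i|) with hD
  have hUU : U * Uᴴ = 1 := by
    exact (Matrix.mem_unitaryGroup_iff).mp hY.eigenvectorUnitary.2
  have hUU' : Uᴴ * U = 1 := by
    exact (Matrix.mem_unitaryGroup_iff').mp hY.eigenvectorUnitary.2
  have key : ∀ A B : Matrix ι ι ℂ, (U*A*Uᴴ)*(U*B*Uᴴ) = U*(A*B)*Uᴴ := by
    intro A B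
    simp only [Matrix.mul_assoc]
    rw [← Matrix.mul_assoc Uᴴ U (B*Uᴴ), hUU', Matrix.one_mul]
  have hDpsd : D.PosSemidef := posSemidef_diagonal_iff.mpr fun i => by
    simp only [hD, Function.comp_apply]
    exact_mod_cast Complex.zero_le_real.mpr (abs_nonneg _)
  have hSpsd : (U * D * Uᴴ).PosSemidef := hDpsd.mul_mul_conjTranspose_same U
  have hsq : (U * D * Uᴴ) ^ 2 = Yᴴ * Y := by
    rw [hY.eq, pow_two, key]
    conv_rhs => rw [hY.spectral_theorem, Unitary.conjStarAlgAut_apply]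
    simp only [Matrix.star_eq_conjTranspose]
    rw [key]
    congr 2
    rw [diagonal_mul_diagonal, diagonal_mul_diagonal]
    refine congrArg diagonal (funext fun i => ?_)
    simp only [Function.comp_apply]
    have hcoe : (RCLike.ofReal (K := ℂ)) = Complex.ofReal := rfl
    rw [hcoe, ← Complex.ofReal_mul, ← Complex.ofReal_mul, abs_mul_abs_self]
  have hsqrt : U * D * Uᴴ = (Matrix.posSemidef_conjTranspose_mul_self Y).1.cfc (√·) := by
    rw [← IsHermitian.cfc_eq, hY.eq, ← sq, ← cfc_pow_id (R := ℝ) Y 2 hY.isSelfAdjoint,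
      ← cfc_comp (√·) (fun x : ℝ => x ^ 2) Y hY.isSelfAdjoint]
    simp only [Function.comp_def, Real.sqrt_sq_eq_abs]
    rw [IsHermitian.cfc_eq hY, IsHermitian.cfc, Unitary.conjStarAlgAut_apply]
    rfl
  change ((Matrix.posSemidef_conjTranspose_mul_self Y).1.cfc (√·)).trace.re = _
  rw [← hsqrt, Matrix.trace_mul_cycle, hUU', Matrix.one_mul, Matrix.trace_diagonal]
  simp

lemma psd_diag_re_nonneg {M : Matrix ι ι ℂ} (hM : M.PosSemidef) (i : ι) :
    0 ≤ (M i i).re := by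
  have h := hM.diag_nonneg (i := i)
  exact (Complex.le_def.mp h).1

lemma trace_herm_mul_le (C Y : Matrix ι ι ℂ) (hY : Y.IsHermitian)
    (h1 : (1 - C).PosSemidef) (h2 : (1 + C).PosSemidef) :
    ((C * Y).trace).re ≤ traceNorm Y := by
  rw [traceNorm_hermitian Y hY]
  set U : Matrix ι ι ℂ := (hY.eigenvectorUnitary : Matrix ι ι ℂ) with hU
  have hUU : U * Uᴴ = 1 := by
    exact (Matrix.mem_unitaryGroup_iff).mp hY.eigenvectorUnitary.2
  have hUU' : Uᴴ * U = 1 := by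
    exact (Matrix.mem_unitaryGroup_iff').mp hY.eigenvectorUnitary.2
  set B : Matrix ι ι ℂ := Uᴴ * C * U with hB
  have hB1 : (1 - B).PosSemidef := by
    have h := h1.conjTranspose_mul_mul_same U
    have : Uᴴ * (1 - C) * U = 1 - B := by
      rw [Matrix.mul_sub, Matrix.mul_one, Matrix.sub_mul, hUU']
    rwa [this] at h
  have hB2 : (1 + B).PosSemidef := by
    have h := h2.conjTranspose_mul_mul_same U
    have : Uᴴ * (1 + C) * U = 1 + B := by
      rw [Matrix.mul_add, Matrix.mul_one, Matrix.add_mul, hUU']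
    rwa [this] at h
  have habs : ∀ i, |(B i i).re| ≤ 1 := by
    intro i
    rw [abs_le]
    constructor
    · have := psd_diag_re_nonneg hB2 i
      simp only [Matrix.add_apply, Matrix.one_apply_eq, Complex.add_re, Complex.one_re] at this
      linarith
    · have := psd_diag_re_nonneg hB1 i
      simp only [Matrix.sub_apply, Matrix.one_apply_eq, Complex.sub_re, Complex.one_re] at this
      linarith
  have hCY : (C * Y).trace = (B * diagonal (RCLike.ofReal ∘ hY.eigenvalues)).trace := by
    conv_lhs => rw [hY.spectral_theorem, Unitary.conjStarAlgAut_apply]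
    simp only [Matrix.star_eq_conjTranspose, ← hU]
    rw [← Matrix.mul_assoc, ← Matrix.mul_assoc,
      Matrix.trace_mul_cycle (C * U) (diagonal (RCLike.ofReal ∘ hY.eigenvalues)) Uᴴ,
      ← Matrix.mul_assoc]
  rw [hCY, Matrix.trace]
  have hdiag : ∀ i, (B * diagonal (RCLike.ofReal ∘ hY.eigenvalues)).diag i
      = B i i * Complex.ofReal (hY.eigenvalues i) := by
    intro i
    simp [Matrix.diag, Matrix.mul_diagonal]
  rw [Complex.re_sum]
  calc ∑ i, ((B * diagonal (RCLike.ofReal ∘ hY.eigenvalues)).diag i).re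
      = ∑ i, (B i i).re * hY.eigenvalues i := by
        refine Finset.sum_congr rfl fun i _ => ?_
        rw [hdiag]
        rw [mul_comm, Complex.re_ofReal_mul]
        ring
    _ ≤ ∑ i, |hY.eigenvalues i| := by
        refine Finset.sum_le_sum fun i _ => ?_
        calc (B i i).re * hY.eigenvalues i ≤ |(B i i).re * hY.eigenvalues i| := le_abs_self _
          _ = |(B i i).re| * |hY.eigenvalues i| := abs_mul _ _
          _ ≤ 1 * |hY.eigenvalues i| := by
              exact mul_le_mul_of_nonneg_right (habs i) (abs_nonneg _)
          _ = |hY.eigenvalues i| := one_mul _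

lemma posSemidef_sum {κ : Type*} {s : Finset κ} {f : κ → Matrix ι ι ℂ}
    (h : ∀ i ∈ s, (f i).PosSemidef) : (∑ i ∈ s, f i).PosSemidef := by
  classical
  induction s using Finset.induction_on with
  | empty => simpa using Matrix.PosSemidef.zero
  | insert _ _ hks ih =>
      rw [Finset.sum_insert hks]
      exact (h _ (Finset.mem_insert_self _ _)).add
        (ih fun i hi => h i (Finset.mem_insert_of_mem hi))

lemma exists_sign (Y : Matrix ι ι ℂ) (hY : Y.IsHermitian) :
    ∃ S : Matrix ι ι ℂ, (1 - S).PosSemidef ∧ (1 + S).PosSemidef ∧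
      ((S * Y).trace).re = traceNorm Y := by
  set U : Matrix ι ι ℂ := (hY.eigenvectorUnitary : Matrix ι ι ℂ) with hU
  have hUU : U * Uᴴ = 1 := by
    exact (Matrix.mem_unitaryGroup_iff).mp hY.eigenvectorUnitary.2
  have hUU' : Uᴴ * U = 1 := by
    exact (Matrix.mem_unitaryGroup_iff').mp hY.eigenvectorUnitary.2
  set sgn : ι → ℂ := fun i => if 0 ≤ hY.eigenvalues i then 1 else -1 with hsgn
  refine ⟨U * diagonal sgn * Uᴴ, ?_, ?_, ?_⟩
  · have hd : diagonal (fun i => 1 - sgn i) = (1 : Matrix ι ι ℂ) - diagonal sgn := by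
      ext i j; by_cases h : i = j <;> simp [diagonal, h, Matrix.one_apply]
    have : (1 : Matrix ι ι ℂ) - U * diagonal sgn * Uᴴ = U * diagonal (fun i => 1 - sgn i) * Uᴴ := by
      rw [hd, Matrix.mul_sub, Matrix.mul_one, Matrix.sub_mul, hUU]
    rw [this]
    refine (posSemidef_diagonal_iff.mpr fun i => ?_).mul_mul_conjTranspose_same U
    by_cases h : 0 ≤ hY.eigenvalues i <;> simp [hsgn, h] <;> norm_num
  · have hd : diagonal (fun i => 1 + sgn i) = (1 : Matrix ι ι ℂ) + diagonal sgn := by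
      ext i j; by_cases h : i = j <;> simp [diagonal, h, Matrix.one_apply]
    have : (1 : Matrix ι ι ℂ) + U * diagonal sgn * Uᴴ = U * diagonal (fun i => 1 + sgn i) * Uᴴ := by
      rw [hd, Matrix.mul_add, Matrix.mul_one, Matrix.add_mul, hUU]
    rw [this]
    refine (posSemidef_diagonal_iff.mpr fun i => ?_).mul_mul_conjTranspose_same U
    by_cases h : 0 ≤ hY.eigenvalues i <;> simp [hsgn, h] <;> norm_num
  · rw [traceNorm_hermitian Y hY]
    conv_lhs => rw [hY.spectral_theorem, Unitary.conjStarAlgAut_apply]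
    simp only [Matrix.star_eq_conjTranspose, ← hU]
    have key : U * diagonal sgn * Uᴴ * (U * diagonal (RCLike.ofReal ∘ hY.eigenvalues) * Uᴴ)
        = U * (diagonal sgn * diagonal (RCLike.ofReal ∘ hY.eigenvalues)) * Uᴴ := by
      simp only [Matrix.mul_assoc]
      rw [← Matrix.mul_assoc Uᴴ U, hUU', Matrix.one_mul]
    rw [key, Matrix.trace_mul_cycle, ← Matrix.mul_assoc, hUU', Matrix.one_mul,
      diagonal_mul_diagonal, Matrix.trace_diagonal]
    rw [Complex.re_sum]
    refine Finset.sum_congr rfl fun i _ => ?_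
    by_cases h : 0 ≤ hY.eigenvalues i
    · simp [hsgn, h, abs_of_nonneg h,
        show (RCLike.ofReal (K := ℂ)) = Complex.ofReal from rfl]
    · push_neg at h
      simp [hsgn, not_le.mpr h, abs_of_neg h,
        show (RCLike.ofReal (K := ℂ)) = Complex.ofReal from rfl]

/-- **Trace-norm contractivity of quantum channels**: if `K₁, …, K_I` are `m × n` complex
matrices with `∑ᵢ Kᵢᴴ Kᵢ = 1ₙ`, then for the channel `Φ(X) = ∑ᵢ Kᵢ X Kᵢᴴ` and every
Hermitian `n × n` matrix `X` we have `‖Φ(X)‖₁ ≤ ‖X‖₁`. -/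
theorem traceNorm_channel_le {m n I : ℕ} (K : Fin I → Matrix (Fin m) (Fin n) ℂ)
    (hK : ∑ i, (K i)ᴴ * K i = 1)
    (X : Matrix (Fin n) (Fin n) ℂ) (hX : X.IsHermitian) :
    traceNorm (∑ i, K i * X * (K i)ᴴ) ≤ traceNorm X := by
  set Y := ∑ i, K i * X * (K i)ᴴ with hYdef
  have hYh : Y.IsHermitian := by
    rw [Matrix.IsHermitian, hYdef, Matrix.conjTranspose_sum]
    refine Finset.sum_congr rfl fun i _ => ?_
    simp only [Matrix.conjTranspose_mul, Matrix.conjTranspose_conjTranspose, hX.eq]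
    rw [Matrix.mul_assoc]
  obtain ⟨S, h1, h2, hS⟩ := exists_sign Y hYh
  set C : Matrix (Fin n) (Fin n) ℂ := ∑ i, (K i)ᴴ * S * (K i) with hC
  have htr : ((S * Y).trace) = ((C * X).trace) := by
    rw [hYdef, Finset.mul_sum, Matrix.trace_sum, hC, Finset.sum_mul, Matrix.trace_sum]
    refine Finset.sum_congr rfl fun i _ => ?_
    rw [show S * (K i * X * (K i)ᴴ) = S * (K i * X) * (K i)ᴴ by simp only [Matrix.mul_assoc],
      Matrix.trace_mul_cycle, ← Matrix.mul_assoc]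
  have h1' : ((1 : Matrix (Fin n) (Fin n) ℂ) - C).PosSemidef := by
    have : (1 : Matrix (Fin n) (Fin n) ℂ) - C = ∑ i, (K i)ᴴ * (1 - S) * (K i) := by
      rw [← hK, hC, ← Finset.sum_sub_distrib]
      refine Finset.sum_congr rfl fun i _ => ?_
      rw [Matrix.mul_sub, Matrix.mul_one, Matrix.sub_mul]
    rw [this]
    exact posSemidef_sum fun i _ => h1.conjTranspose_mul_mul_same _
  have h2' : ((1 : Matrix (Fin n) (Fin n) ℂ) + C).PosSemidef := by
    have : (1 : Matrix (Fin n) (Fin n) ℂ) + C = ∑ i, (K i)ᴴ * (1 + S) * (K i) := by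
      rw [← hK, hC, ← Finset.sum_add_distrib]
      refine Finset.sum_congr rfl fun i _ => ?_
      rw [Matrix.mul_add, Matrix.mul_one, Matrix.add_mul]
    rw [this]
    exact posSemidef_sum fun i _ => h2.conjTranspose_mul_mul_same _
  calc traceNorm Y = ((S * Y).trace).re := hS.symm
    _ = ((C * X).trace).re := by rw [htr]
    _ ≤ traceNorm X := trace_herm_mul_le C X hX h1' h2'
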